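/- In the global model with local reward r : A × X → ℝ, for every local policy μ and every external policy η, the expected total local reward satisfies E[Σ_{t=0}^{h−1} r(a^t, x^t)] ≤ V̂^P, where V̂^P := sup_π Σ_{(x,y)∈X×Y} b0(x,y)·ν^IO_h(π)(x), the supremum ranging over all depth-h local policies π, and where the influence-optimistic value vectors are defined by ν^IO_0(π)(x) = 0 and ν^IO_{k+1}(π)(x) = r(π(ε),x) + Σ_{o∈O} max_{u∈U} Σ_{x'=(x'l,x'n)∈X} Ω(o|π(ε),x')·Pl(x'l|x,π(ε))·Pn(x'n|x,π(ε),u)·ν^IO_k(π↓o)(x'). In particular, the locally-optimal value of the sub-problem is at most the influence-optimistic Q-MPOMDP upper bound V̂^P. -/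

import Mathlib

open Finset

section GlobalModel

variable {Xl Xn Y A E O U : Type*}
  [Fintype Xl] [Nonempty Xl] [Fintype Xn] [Nonempty Xn] [Fintype Y] [Nonempty Y]
  [Fintype A] [Nonempty A] [Fintype E] [Nonempty E]
  [Fintype O] [Nonempty O] [Fintype U] [Nonempty U]

/-- Expected total local reward `E[∑_{t<k} r(a^t, x^t)]` in the global model, obtained
by backward recursion over the remaining horizon `k`: local actions are chosen by the
local policy `μ` from the local observation history `obs`, external actions by the
external policy `η` from the entire history so far (current state `s` together with the
list `hist` of all past states, joint actions and observations); the global transition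
probability is `Pl · Pn(·|σ) · G` and local observations have probability `Ω`. -/
noncomputable def expTotalr (Pl : Xl → (Xl × Xn) → A → ℝ)
    (Pn : Xn → (Xl × Xn) → A → U → ℝ)
    (G : Y → ((Xl × Xn) × Y) → A × E → (Xl × Xn) → ℝ)
    (σ : ((Xl × Xn) × Y) → A × E → U) (Ω : O → A → (Xl × Xn) → ℝ)
    (r : A → (Xl × Xn) → ℝ)
    (μ : List O → A)
    (η : ((Xl × Xn) × Y) → List (((Xl × Xn) × Y) × (A × E) × O) → E) :
    ℕ → ((Xl × Xn) × Y) → List O → List (((Xl × Xn) × Y) × (A × E) × O) → ℝ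
  | 0 => fun _ _ _ => 0
  | k + 1 => fun s obs hist =>
      r (μ obs) s.1 +
        ∑ s' : (Xl × Xn) × Y, ∑ o : O,
          Pl s'.1.1 s.1 (μ obs) * Pn s'.1.2 s.1 (μ obs) (σ s (μ obs, η s hist)) *
            G s'.2 s (μ obs, η s hist) s'.1 * Ω o (μ obs) s'.1 *
            expTotalr Pl Pn G σ Ω r μ η k s' (obs ++ [o])
              (hist ++ [(s, (μ obs, η s hist), o)])

/-- Influence-optimistic (IO, Q-MPOMDP style) value vectors `ν^IO_k(π)(x)`. A depth-`k`
local policy is a function `List O → A`; `π []` is its action at the empty history and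
`fun h => π (o :: h)` is the subtree policy `π↓o`. -/
noncomputable def nuIO (Pl : Xl → (Xl × Xn) → A → ℝ) (Pn : Xn → (Xl × Xn) → A → U → ℝ)
    (Ω : O → A → (Xl × Xn) → ℝ) (r : A → (Xl × Xn) → ℝ) :
    ℕ → (List O → A) → (Xl × Xn) → ℝ
  | 0 => fun _ _ => 0
  | k + 1 => fun π x =>
      r (π []) x + ∑ o : O,
        Finset.univ.sup' Finset.univ_nonempty (fun u : U =>
          ∑ x' : Xl × Xn,
            Ω o (π []) x' * Pl x'.1 x (π []) * Pn x'.2 x (π []) u *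
              nuIO Pl Pn Ω r k (fun h => π (o :: h)) x')

/-- Uniform bound on `nuIO`. -/
lemma nuIO_bound (Pl : Xl → (Xl × Xn) → A → ℝ) (Pn : Xn → (Xl × Xn) → A → U → ℝ)
    (Ω : O → A → (Xl × Xn) → ℝ) (r : A → (Xl × Xn) → ℝ)
    (hPl0 : ∀ x'l x a, 0 ≤ Pl x'l x a) (hPl1 : ∀ x a, ∑ x'l : Xl, Pl x'l x a = 1)
    (hPn0 : ∀ x'n x a u, 0 ≤ Pn x'n x a u) (hPn1 : ∀ x a u, ∑ x'n : Xn, Pn x'n x a u = 1)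
    (hΩ0 : ∀ o a x', 0 ≤ Ω o a x') (hΩ1 : ∀ a x', ∑ o : O, Ω o a x' = 1)
    (k : ℕ) : ∃ C : ℝ, 0 ≤ C ∧ ∀ (π : List O → A) x, nuIO Pl Pn Ω r k π x ≤ C := by
  induction k with
  | zero => exact ⟨0, le_refl 0, fun π x => by simp [nuIO]⟩
  | succ k ih =>
    obtain ⟨C, hC0, hC⟩ := ih
    set R : ℝ := max 0 (Finset.univ.sup' Finset.univ_nonempty
      (fun p : A × (Xl × Xn) => r p.1 p.2)) with hR
    have hΩ1' : ∀ o a x', Ω o a x' ≤ 1 := by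
      intro o a x'
      calc Ω o a x' ≤ ∑ o' : O, Ω o' a x' :=
            Finset.single_le_sum (fun o' _ => hΩ0 o' a x') (Finset.mem_univ o)
        _ = 1 := hΩ1 a x'
    refine ⟨R + (Fintype.card O : ℝ) * C, by positivity, fun π x => ?_⟩
    show r (π []) x + _ ≤ _
    have h1 : r (π []) x ≤ R :=
      le_max_of_le_right (Finset.le_sup' (fun p : A × (Xl × Xn) => r p.1 p.2)
        (Finset.mem_univ (π [], x)))
    have h2 : ∀ o : O, Finset.univ.sup' Finset.univ_nonempty (fun u : U =>
        ∑ x' : Xl × Xn, Ω o (π []) x' * Pl x'.1 x (π []) * Pn x'.2 x (π []) u *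
          nuIO Pl Pn Ω r k (fun h => π (o :: h)) x') ≤ C := by
      intro o
      apply Finset.sup'_le
      intro u _
      have hsum : ∑ x' : Xl × Xn, Ω o (π []) x' * Pl x'.1 x (π []) * Pn x'.2 x (π []) u
          ≤ 1 := by
        calc ∑ x' : Xl × Xn, Ω o (π []) x' * Pl x'.1 x (π []) * Pn x'.2 x (π []) u
            ≤ ∑ x' : Xl × Xn, Pl x'.1 x (π []) * Pn x'.2 x (π []) u := by
              apply Finset.sum_le_sum
              intro x' _
              have := mul_le_of_le_one_left
                (mul_nonneg (hPl0 x'.1 x (π [])) (hPn0 x'.2 x (π []) u)) (hΩ1' o (π []) x')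
              linarith [this, mul_assoc (Ω o (π []) x') (Pl x'.1 x (π [])) (Pn x'.2 x (π []) u)]
          _ = 1 := by
              rw [Fintype.sum_prod_type]
              have : ∀ xl : Xl, ∑ xn : Xn, Pl xl x (π []) * Pn xn x (π []) u
                  = Pl xl x (π []) := by
                intro xl; rw [← Finset.mul_sum, hPn1, mul_one]
              rw [Finset.sum_congr rfl fun xl _ => this xl, hPl1]
      calc ∑ x' : Xl × Xn, Ω o (π []) x' * Pl x'.1 x (π []) * Pn x'.2 x (π []) u *
            nuIO Pl Pn Ω r k (fun h => π (o :: h)) x'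
          ≤ ∑ x' : Xl × Xn, Ω o (π []) x' * Pl x'.1 x (π []) * Pn x'.2 x (π []) u * C := by
            apply Finset.sum_le_sum
            intro x' _
            exact mul_le_mul_of_nonneg_left (hC _ _)
              (mul_nonneg (mul_nonneg (hΩ0 _ _ _) (hPl0 _ _ _)) (hPn0 _ _ _ _))
        _ = (∑ x' : Xl × Xn, Ω o (π []) x' * Pl x'.1 x (π []) * Pn x'.2 x (π []) u) * C := by
            rw [Finset.sum_mul]
        _ ≤ 1 * C := mul_le_mul_of_nonneg_right hsum hC0
        _ = C := one_mul C
    calc r (π []) x + ∑ o : O, Finset.univ.sup' Finset.univ_nonempty (fun u : U =>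
          ∑ x' : Xl × Xn, Ω o (π []) x' * Pl x'.1 x (π []) * Pn x'.2 x (π []) u *
            nuIO Pl Pn Ω r k (fun h => π (o :: h)) x')
        ≤ R + ∑ o : O, C := add_le_add h1 (Finset.sum_le_sum fun o _ => h2 o)
      _ = R + (Fintype.card O : ℝ) * C := by
          rw [Finset.sum_const, nsmul_eq_mul]; rfl

/-- Key pointwise bound: expected total reward is at most the IO value of the
policy obtained from `μ` by fixing the observation prefix `obs`. -/
lemma expTotalr_le_nuIO (Pl : Xl → (Xl × Xn) → A → ℝ) (Pn : Xn → (Xl × Xn) → A → U → ℝ)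
    (G : Y → ((Xl × Xn) × Y) → A × E → (Xl × Xn) → ℝ)
    (σ : ((Xl × Xn) × Y) → A × E → U) (Ω : O → A → (Xl × Xn) → ℝ)
    (r : A → (Xl × Xn) → ℝ)
    (hPl0 : ∀ x'l x a, 0 ≤ Pl x'l x a)
    (hPn0 : ∀ x'n x a u, 0 ≤ Pn x'n x a u)
    (hG0 : ∀ y' s ae x', 0 ≤ G y' s ae x') (hG1 : ∀ s ae x', ∑ y' : Y, G y' s ae x' = 1)
    (hΩ0 : ∀ o a x', 0 ≤ Ω o a x')
    (μ : List O → A)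
    (η : ((Xl × Xn) × Y) → List (((Xl × Xn) × Y) × (A × E) × O) → E) :
    ∀ (k : ℕ) (s : (Xl × Xn) × Y) (obs : List O)
      (hist : List (((Xl × Xn) × Y) × (A × E) × O)),
      expTotalr Pl Pn G σ Ω r μ η k s obs hist ≤
        nuIO Pl Pn Ω r k (fun h => μ (obs ++ h)) s.1 := by
  intro k
  induction k with
  | zero => intro s obs hist; simp [expTotalr, nuIO]
  | succ k ih =>
    intro s obs hist
    show expTotalr Pl Pn G σ Ω r μ η (k+1) s obs hist ≤ _
    simp only [expTotalr, nuIO, List.append_nil]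
    apply add_le_add_right
    set a := μ obs with ha
    set u₀ := σ s (a, η s hist) with hu₀
    have step1 : ∑ s' : (Xl × Xn) × Y, ∑ o : O,
        Pl s'.1.1 s.1 a * Pn s'.1.2 s.1 a u₀ * G s'.2 s (a, η s hist) s'.1 *
          Ω o a s'.1 * expTotalr Pl Pn G σ Ω r μ η k s' (obs ++ [o])
            (hist ++ [(s, (a, η s hist), o)])
        ≤ ∑ s' : (Xl × Xn) × Y, ∑ o : O,
        Pl s'.1.1 s.1 a * Pn s'.1.2 s.1 a u₀ * G s'.2 s (a, η s hist) s'.1 *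
          Ω o a s'.1 * nuIO Pl Pn Ω r k (fun h => μ (obs ++ o :: h)) s'.1 := by
      apply Finset.sum_le_sum
      intro s' _
      apply Finset.sum_le_sum
      intro o _
      apply mul_le_mul_of_nonneg_left
      · have := ih s' (obs ++ [o]) (hist ++ [(s, (a, η s hist), o)])
        have heq : (fun h => μ ((obs ++ [o]) ++ h)) = (fun h => μ (obs ++ o :: h)) := by
          funext h; rw [List.append_assoc]; rfl
        rwa [heq] at this
      · exact mul_nonneg (mul_nonneg (mul_nonneg (hPl0 _ _ _) (hPn0 _ _ _ _))
          (hG0 _ _ _ _)) (hΩ0 _ _ _)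
    have step2 : ∑ s' : (Xl × Xn) × Y, ∑ o : O,
        Pl s'.1.1 s.1 a * Pn s'.1.2 s.1 a u₀ * G s'.2 s (a, η s hist) s'.1 *
          Ω o a s'.1 * nuIO Pl Pn Ω r k (fun h => μ (obs ++ o :: h)) s'.1
        = ∑ o : O, ∑ x' : Xl × Xn,
          Ω o a x' * Pl x'.1 s.1 a * Pn x'.2 s.1 a u₀ *
            nuIO Pl Pn Ω r k (fun h => μ (obs ++ o :: h)) x' := by
      rw [Fintype.sum_prod_type]
      refine (Finset.sum_congr rfl fun x' _ => ?_).trans Finset.sum_comm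
      rw [Finset.sum_comm]
      apply Finset.sum_congr rfl
      intro o _
      have : ∑ y' : Y,
          Pl x'.1 s.1 a * Pn x'.2 s.1 a u₀ * G y' s (a, η s hist) x' *
            Ω o a x' * nuIO Pl Pn Ω r k (fun h => μ (obs ++ o :: h)) x'
          = (∑ y' : Y, G y' s (a, η s hist) x') *
            (Pl x'.1 s.1 a * Pn x'.2 s.1 a u₀ * Ω o a x' *
              nuIO Pl Pn Ω r k (fun h => μ (obs ++ o :: h)) x') := by
        rw [Finset.sum_mul]
        apply Finset.sum_congr rfl
        intro y' _
        ring
      rw [this, hG1, one_mul]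
      ring
    have step3 : ∑ o : O, ∑ x' : Xl × Xn,
        Ω o a x' * Pl x'.1 s.1 a * Pn x'.2 s.1 a u₀ *
          nuIO Pl Pn Ω r k (fun h => μ (obs ++ o :: h)) x'
        ≤ ∑ o : O, Finset.univ.sup' Finset.univ_nonempty (fun u : U =>
          ∑ x' : Xl × Xn, Ω o a x' * Pl x'.1 s.1 a * Pn x'.2 s.1 a u *
            nuIO Pl Pn Ω r k (fun h => μ (obs ++ o :: h)) x') := by
      apply Finset.sum_le_sum
      intro o _
      exact Finset.le_sup' (fun u : U =>
        ∑ x' : Xl × Xn, Ω o a x' * Pl x'.1 s.1 a * Pn x'.2 s.1 a u *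
          nuIO Pl Pn Ω r k (fun h => μ (obs ++ o :: h)) x') (Finset.mem_univ u₀)
    calc _ ≤ _ := step1
      _ = _ := step2
      _ ≤ _ := step3

/-- in the global model, for every local policy `μ` and every external
policy `η`, the expected total local reward is at most the influence-optimistic
Q-MPOMDP upper bound `V̂^P = sup_π ∑_{(x,y)} b0(x,y) · ν^IO_h(π)(x)`; in particular the
locally-optimal value of the sub-problem is at most `V̂^P`. -/
theorem expTotalr_le_IO_QMPOMDP
    (Pl : Xl → (Xl × Xn) → A → ℝ) (Pn : Xn → (Xl × Xn) → A → U → ℝ)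
    (G : Y → ((Xl × Xn) × Y) → A × E → (Xl × Xn) → ℝ)
    (σ : ((Xl × Xn) × Y) → A × E → U) (Ω : O → A → (Xl × Xn) → ℝ)
    (r : A → (Xl × Xn) → ℝ)
    (hPl0 : ∀ x'l x a, 0 ≤ Pl x'l x a) (hPl1 : ∀ x a, ∑ x'l : Xl, Pl x'l x a = 1)
    (hPn0 : ∀ x'n x a u, 0 ≤ Pn x'n x a u) (hPn1 : ∀ x a u, ∑ x'n : Xn, Pn x'n x a u = 1)
    (hG0 : ∀ y' s ae x', 0 ≤ G y' s ae x') (hG1 : ∀ s ae x', ∑ y' : Y, G y' s ae x' = 1)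
    (hΩ0 : ∀ o a x', 0 ≤ Ω o a x') (hΩ1 : ∀ a x', ∑ o : O, Ω o a x' = 1)
    (b0 : (Xl × Xn) × Y → ℝ) (hb00 : ∀ s, 0 ≤ b0 s) (hb01 : ∑ s : (Xl × Xn) × Y, b0 s = 1)
    (h : ℕ) (μ : List O → A)
    (η : ((Xl × Xn) × Y) → List (((Xl × Xn) × Y) × (A × E) × O) → E) :
    ∑ s : (Xl × Xn) × Y, b0 s * expTotalr Pl Pn G σ Ω r μ η h s [] [] ≤
      ⨆ π : List O → A, ∑ p : (Xl × Xn) × Y, b0 p * nuIO Pl Pn Ω r h π p.1 := by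
  obtain ⟨C, hC0, hC⟩ := nuIO_bound Pl Pn Ω r hPl0 hPl1 hPn0 hPn1 hΩ0 hΩ1 h
  have hbdd : BddAbove (Set.range fun π : List O → A =>
      ∑ p : (Xl × Xn) × Y, b0 p * nuIO Pl Pn Ω r h π p.1) := by
    refine ⟨C, ?_⟩
    rintro _ ⟨π, rfl⟩
    calc ∑ p : (Xl × Xn) × Y, b0 p * nuIO Pl Pn Ω r h π p.1
        ≤ ∑ p : (Xl × Xn) × Y, b0 p * C :=
          Finset.sum_le_sum fun p _ => mul_le_mul_of_nonneg_left (hC π p.1) (hb00 p)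
      _ = C := by rw [← Finset.sum_mul, hb01, one_mul]
  have h1 : ∑ s : (Xl × Xn) × Y, b0 s * expTotalr Pl Pn G σ Ω r μ η h s [] [] ≤
      ∑ p : (Xl × Xn) × Y, b0 p * nuIO Pl Pn Ω r h μ p.1 := by
    apply Finset.sum_le_sum
    intro s _
    apply mul_le_mul_of_nonneg_left _ (hb00 s)
    have := expTotalr_le_nuIO Pl Pn G σ Ω r hPl0 hPn0 hG0 hG1 hΩ0 μ η h s [] []
    simpa using this
  exact h1.trans (le_ciSup hbdd μ)

end GlobalModel
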